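/- Let G ≥ 2, let r : {1,…,G} → {0,1} have at least one i with r(i) = 1 and at least one j with r(j) = 0, and let c : {1,…,G} → [0,1]. Define the calibrated rewards r̃(i) = r(i) − (1 − r(i))·c(i)/G and their mean μ̃ = (1/G)·Σ_{i=1}^G r̃(i). Then for every i: if r(i) = 1 then r̃(i) − μ̃ > 0, and if r(i) = 0 then r̃(i) − μ̃ < 0. -/

import Mathlib

open Finset

/-- **Calibration preserves GRPO's sign invariance in mixed groups.** With binary
rewards `r` (not all equal), confidence penalties `c(i) ∈ [0,1]`, and calibrated
rewards `r̃(i) = r(i) - (1 - r(i))·c(i)/G`, after subtracting the group mean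
`μ̃ = (1/G)·∑ᵢ r̃(i)`, every correct generation has strictly positive advantage and
every incorrect generation has strictly negative advantage. -/
theorem calibrated_sign_invariance (G : ℕ) (hG : 2 ≤ G) (r c : Fin G → ℝ)
    (hr : ∀ i, r i = 0 ∨ r i = 1)
    (hc : ∀ i, c i ∈ Set.Icc (0 : ℝ) 1)
    (hpos : ∃ i, r i = 1) (hneg : ∃ j, r j = 0) :
    ∀ i, (r i = 1 →
        0 < (r i - (1 - r i) * c i / G) -
          (1 / (G : ℝ)) * ∑ k, (r k - (1 - r k) * c k / G)) ∧
      (r i = 0 →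
        (r i - (1 - r i) * c i / G) -
          (1 / (G : ℝ)) * ∑ k, (r k - (1 - r k) * c k / G) < 0) := by
  have hG0 : (0 : ℝ) < G := by exact_mod_cast Nat.lt_of_lt_of_le Nat.zero_lt_two hG
  set f : Fin G → ℝ := fun k => r k - (1 - r k) * c k / G with hf
  obtain ⟨i₀, hi₀⟩ := hpos
  obtain ⟨j₀, hj₀⟩ := hneg
  have hfval : ∀ k, (r k = 1 → f k = 1) ∧ (r k = 0 → f k = -(c k / G)) := by
    intro k
    constructor <;> intro h <;> simp [hf, h]
  have hub : ∀ k, f k ≤ 1 := by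
    intro k
    rcases hr k with h | h
    · rw [(hfval k).2 h]
      have := (hc k).1
      have : 0 ≤ c k / G := div_nonneg (hc k).1 hG0.le
      linarith
    · rw [(hfval k).1 h]
  have hlb : ∀ k, -(1 / (G:ℝ)) ≤ f k := by
    intro k
    rcases hr k with h | h
    · rw [(hfval k).2 h]
      have h1 := (hc k).2
      have : c k / G ≤ 1 / G := by
        gcongr
      linarith
    · rw [(hfval k).1 h]
      have : (0:ℝ) < 1 / G := by positivity
      linarith
  -- upper bound on sum: S < G
  have hSlt : ∑ k, f k < G := by
    have : ∑ k, f k < ∑ _k : Fin G, (1:ℝ) := by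
      apply Finset.sum_lt_sum (fun k _ => hub k) ⟨j₀, Finset.mem_univ _, ?_⟩
      rw [(hfval j₀).2 hj₀]
      have h0 := (hc j₀).1
      have : 0 ≤ c j₀ / G := div_nonneg (hc j₀).1 hG0.le
      linarith
    simpa using this
  -- lower bound: S > 0
  have hSgt : 0 < ∑ k, f k := by
    have hle : ∀ k ∈ Finset.univ, (-(1/(G:ℝ)) + if k = i₀ then (1:ℝ) + 1/G else 0) ≤ f k := by
      intro k _
      by_cases h : k = i₀
      · subst h
        rw [(hfval k).1 hi₀]
        simp
      · simpa [h, one_div] using hlb k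
    have := Finset.sum_le_sum hle
    have hsum : ∑ k : Fin G, (-(1/(G:ℝ)) + if k = i₀ then (1:ℝ) + 1/G else 0)
        = 1/G := by
      rw [Finset.sum_add_distrib, Finset.sum_ite_eq' Finset.univ i₀ (fun _ => 1 + 1/(G:ℝ))]
      simp [Finset.mem_univ]
      field_simp
      ring
    rw [hsum] at this
    have : (0:ℝ) < 1/G := by positivity
    linarith
  intro i
  have hfi : r i - (1 - r i) * c i / G = f i := rfl
  constructor
  · intro hi
    rw [hfi, (hfval i).1 hi]
    have : (1/(G:ℝ)) * ∑ k, f k < (1/G) * G :=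
      (mul_lt_mul_iff_right₀ (by positivity)).2 hSlt
    rw [one_div_mul_cancel (ne_of_gt hG0)] at this
    linarith
  · intro hi
    rw [hfi, (hfval i).2 hi]
    have h1 : 0 < (1/(G:ℝ)) * ∑ k, f k := mul_pos (by positivity) hSgt
    have h2 : 0 ≤ c i / G := div_nonneg (hc i).1 hG0.le
    linarith
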